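/- Let n ≥ 2 and let U = (q_{ij}) ∈ Sp(n). For 1 ≤ m ≤ n with q_{nm} ≠ 0 and β ∈ {1,2,3}, define φ_m^β(X) := ⟨q_{nm} e_β, (UX)_{nm}⟩ / |q_{nm}|² on sp(n), where ⟨p, r⟩ := Re(p r̄). Then for every 1 ≤ i ≤ n, every 1 ≤ m ≤ n with q_{nm} ≠ 0, and every β ∈ {1,2,3}: Σ_{1≤j<k≤n} Σ_{a=0}^{3} ⟨q_{ni}, (U X^{(a)}_{jk})_{ni}⟩ · φ_m^β(U X^{(a)}_{jk}) = 0. -/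

import Mathlib

open Quaternion Matrix

/-- `e 0 = 1`, `e 1 = i`, `e 2 = j`, `e 3 = k` in the quaternions. -/
noncomputable def quatE : Fin 4 → ℍ[ℝ] :=
  ![⟨1, 0, 0, 0⟩, ⟨0, 1, 0, 0⟩, ⟨0, 0, 1, 0⟩, ⟨0, 0, 0, 1⟩]

/-- The off-diagonal generators `X^{(a)}_{jk} = E_{jk} e_a - E_{kj} ē_a`. -/
noncomputable def Xoff (n : ℕ) (j k : Fin n) (a : Fin 4) :
    Matrix (Fin n) (Fin n) ℍ[ℝ] :=
  Matrix.single j k (quatE a) - Matrix.single k j (star (quatE a))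

/-- Vanishing of the horizontal cometric pairing of `dλ_i` with the
Maurer–Cartan component one-form `ω_m^β`: for `U ∈ Sp(n)`, `q_{nm} ≠ 0`,
`Σ_{j<k} Σ_a ⟨q_{ni}, (U X^{(a)}_{jk})_{ni}⟩ · φ_m^β(U X^{(a)}_{jk}) = 0`,
where `⟨p,r⟩ = Re(p r̄)` and `φ_m^β(X) = ⟨q_{nm}e_β, (UX)_{nm}⟩/|q_{nm}|²`. -/
theorem radial_area_covariation_vanishes (n : ℕ) (hn : 2 ≤ n)
    (U : Matrix (Fin n) (Fin n) ℍ[ℝ]) (hU : Uᴴ * U = 1)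
    (lst : Fin n) (hlst : lst.val = n - 1)
    (i m : Fin n) (hm : U lst m ≠ 0) (β : Fin 3) :
    (∑ j : Fin n, ∑ k : Fin n, if j < k then
        ∑ a : Fin 4,
          (U lst i * star ((U * Xoff n j k a) lst i)).re *
            (((U lst m * quatE β.succ) * star ((U * Xoff n j k a) lst m)).re /
              ‖U lst m‖ ^ 2)
      else 0) = 0 := by
  obtain ⟨u, hu, hure⟩ : ∃ u : ℍ[ℝ], quatE β.succ = u ∧ u.re = 0 :=
    ⟨_, rfl, by fin_cases β <;> rfl⟩
  rw [hu]
  apply Finset.sum_eq_zero; intro j _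
  apply Finset.sum_eq_zero; intro k _
  split_ifs with hjk
  swap
  · rfl
  have hjk' : j ≠ k := ne_of_lt hjk
  have hent : ∀ (a : Fin 4) (p : Fin n),
      (U * Xoff n j k a) lst p =
        (if p = k then U lst j * quatE a else 0) -
        (if p = j then U lst k * star (quatE a) else 0) := by
    intro a p
    unfold Xoff
    rw [Matrix.mul_sub, Matrix.sub_apply]
    congr 1 <;> split_ifs with h <;> simp [h]
  simp only [hent, ← mul_div_assoc, ← Finset.sum_div]
  rw [div_eq_zero_iff]
  left
  by_cases hik : i = k <;> by_cases hij : i = j <;> by_cases hmk : m = k <;> by_cases hmj : m = j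
  all_goals first
    | exact absurd (hij.symm.trans hik) hjk'
    | exact absurd (hmj.symm.trans hmk) hjk'
    | (simp only [hik, hij, hmk, hmj, hjk', Ne.symm hjk', eq_self_iff_true, if_true, if_false,
        ite_true, ite_false, sub_zero, zero_sub, star_zero, mul_zero, zero_mul,
        Quaternion.re_zero, Finset.sum_const_zero]
       try rfl)
  all_goals
    · rw [Fin.sum_univ_four]
      simp only [Quaternion.re_mul, Quaternion.imI_mul, Quaternion.imJ_mul, Quaternion.imK_mul,
        Quaternion.re_star, Quaternion.imI_star, Quaternion.imJ_star, Quaternion.imK_star,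
        Quaternion.re_neg, Quaternion.imI_neg, Quaternion.imJ_neg, Quaternion.imK_neg,
        hure,
        mul_zero, zero_mul, mul_one, one_mul, sub_zero, zero_sub, add_zero, zero_add, neg_zero,
        mul_neg, neg_mul, neg_neg]
      simp only [show (quatE 0).re = 1 from rfl, show (quatE 0).imI = 0 from rfl,
        show (quatE 0).imJ = 0 from rfl, show (quatE 0).imK = 0 from rfl,
        show (quatE 1).re = 0 from rfl, show (quatE 1).imI = 1 from rfl,
        show (quatE 1).imJ = 0 from rfl, show (quatE 1).imK = 0 from rfl,
        show (quatE 2).re = 0 from rfl, show (quatE 2).imI = 0 from rfl,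
        show (quatE 2).imJ = 1 from rfl, show (quatE 2).imK = 0 from rfl,
        show (quatE 3).re = 0 from rfl, show (quatE 3).imI = 0 from rfl,
        show (quatE 3).imJ = 0 from rfl, show (quatE 3).imK = 1 from rfl]
      ring
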